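/- Let S be an inverse semigroup acting transitively on a set Y, let y ∈ Y, let F be the set of idempotents of the stabilizer S_y, and let H = F↑. Let X be the set of left cosets of H in S, with the partial action a · (sH)↑ = ((a·s)H)↑ defined whenever inv(a·s)·(a·s) ∈ H. Then this is a transitive action of S on X (satisfying axioms (A1) and (A2)), the stabilizer of the point H ∈ X equals H, and there exists a surjective strong morphism α : X → Y of S-actions with α(H) = y. Hence every transitive action of S is strongly covered by a universal one. -/

import Mathlib

namespace InvSgpPaper

/-- `inv` makes the semigroup `S` an inverse semigroup: `a * inv a * a = a`,
`inv a * a * inv a = inv a`, and all idempotents commute. -/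
structure IsInvSgp (S : Type*) [Semigroup S] (inv : S → S) : Prop where
  mul_inv_mul : ∀ a : S, a * inv a * a = a
  inv_mul_inv : ∀ a : S, inv a * a * inv a = inv a
  idem_comm : ∀ e f : S, e * e = e → f * f = f → e * f = f * e

section Defs

variable {S X Y : Type*} [Semigroup S]

/-- The natural partial order on an inverse semigroup:
`a ≤ b` iff `a = e * b` for some idempotent `e`. -/
def nle (a b : S) : Prop := ∃ e : S, e * e = e ∧ a = e * b

/-- The upward closure `A↑` of a subset `A`. -/
def up (A : Set S) : Set S := {s : S | ∃ a ∈ A, nle a s}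

/-- A closed inverse subsemigroup: closed under multiplication, under `inv`,
and upward closed (`H = H↑`). -/
def IsClosedInvSub (inv : S → S) (H : Set S) : Prop :=
  (∀ a ∈ H, ∀ b ∈ H, a * b ∈ H) ∧ (∀ a ∈ H, inv a ∈ H) ∧ up H = H

/-- The left coset `(sH)↑ = {x | s * h ≤ x for some h ∈ H}`. -/
def lcoset (s : S) (H : Set S) : Set S := {x : S | ∃ h ∈ H, nle (s * h) x}

/-- The set of idempotents of a subset `A`. -/
def idemSet (A : Set S) : Set S := {e ∈ A | e * e = e}

/-- A filter in `E(S)`: a nonempty set of idempotents closed under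
multiplication and upward closed within `E(S)`. -/
def IsFilterE (F : Set S) : Prop :=
  F.Nonempty ∧ (∀ e ∈ F, e * e = e) ∧ (∀ e ∈ F, ∀ f ∈ F, e * f ∈ F) ∧
    (∀ e ∈ F, ∀ f : S, f * f = f → nle e f → f ∈ F)

/-- `F̄ = {s ∈ S : ∀ f ∈ F, inv s * f * s ∈ F ∧ s * f * inv s ∈ F}`. -/
def fbar (inv : S → S) (F : Set S) : Set S :=
  {s : S | ∀ f ∈ F, inv s * f * s ∈ F ∧ s * f * inv s ∈ F}

/-- The minimum group congruence `σ`: `a σ b` iff some `c` satisfies `c ≤ a` and `c ≤ b`. -/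
def sigmaRel (a b : S) : Prop := ∃ c : S, nle c a ∧ nle c b

/-- The elementwise product of two subsets. -/
def setMul (A B : Set S) : Set S := {x : S | ∃ a ∈ A, ∃ b ∈ B, x = a * b}

/-- The elementwise inverse `A⁻¹` of a subset. -/
def setInv (inv : S → S) (A : Set S) : Set S := inv '' A

/-- An atlas: a subset `A` with `A·A⁻¹·A = A`. -/
def IsAtlas (inv : S → S) (A : Set S) : Prop := setMul (setMul A (setInv inv A)) A = A

/-- A (down-)directed subset: nonempty, and any two elements have a common
lower bound inside it. -/
def IsDirectedSet (A : Set S) : Prop :=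
  A.Nonempty ∧ ∀ a ∈ A, ∀ b ∈ A, ∃ c ∈ A, nle c a ∧ nle c b

/-- An action of `S` on `X` by partial maps, axioms (A1) and (A2). -/
def IsAction (act : S → X → Option X) : Prop :=
  (∀ e : S, e * e = e → ∀ x y : X, act e x = some y → y = x) ∧
    (∀ (s t : S) (x : X), act (s * t) x = (act t x).bind (act s))

/-- Transitivity of an action. -/
def IsTransitiveAct (act : S → X → Option X) : Prop :=
  ∀ x y : X, ∃ s : S, act s x = some y

/-- Effectiveness of an action: every point is in the domain of some element. -/
def IsEffectiveAct (act : S → X → Option X) : Prop :=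
  ∀ x : X, ∃ (s : S) (x' : X), act s x = some x'

/-- The stabilizer of a point. -/
def stab (act : S → X → Option X) (x : X) : Set S := {s : S | act s x = some x}

/-- A morphism of `S`-actions. -/
def IsMorphism (actX : S → X → Option X) (actY : S → Y → Option Y) (α : X → Y) : Prop :=
  ∀ (s : S) (x x' : X), actX s x = some x' → actY s (α x) = some (α x')

/-- A strong morphism of `S`-actions. -/
def IsStrongMorphism (actX : S → X → Option X) (actY : S → Y → Option Y)
    (α : X → Y) : Prop :=
  IsMorphism actX actY α ∧
    ∀ (s : S) (x : X) (y' : Y), actY s (α x) = some y' → ∃ x' : X, actX s x = some x'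

end Defs
section Aux

variable {S : Type*} [Semigroup S] {inv : S → S}

lemma comm3 {e f : S} (h : e * f = f * e) (x : S) : e * (f * x) = f * (e * x) := by
  rw [← mul_assoc, h, mul_assoc]

lemma comm4 {u1 u2 v1 v2 : S} (h : (u1*u2)*(v1*v2) = (v1*v2)*(u1*u2)) (x : S) :
    u1*(u2*(v1*(v2*x))) = v1*(v2*(u1*(u2*x))) := by
  have h2 := comm3 h x
  simpa [mul_assoc] using h2

lemma collapse4 {u1 u2 : S} (h : (u1*u2)*(u1*u2) = u1*u2) (x : S) :
    u1*(u2*(u1*(u2*x))) = u1*(u2*x) := by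
  have h2 : (u1*u2)*((u1*u2)*x) = (u1*u2)*x := by rw [← mul_assoc, h]
  simpa [mul_assoc] using h2

lemma idem_invmul (hS : IsInvSgp S inv) (a : S) :
    (inv a * a) * (inv a * a) = inv a * a := by
  have h := hS.inv_mul_inv a
  calc (inv a * a) * (inv a * a) = (inv a * a * inv a) * a := by simp [mul_assoc]
    _ = inv a * a := by rw [h]

lemma idem_mulinv (hS : IsInvSgp S inv) (a : S) :
    (a * inv a) * (a * inv a) = a * inv a := by
  have h := hS.mul_inv_mul a
  calc (a * inv a) * (a * inv a) = (a * inv a * a) * inv a := by simp [mul_assoc]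
    _ = a * inv a := by rw [h]

lemma inv_unique (hS : IsInvSgp S inv) {a x : S}
    (h1 : a * x * a = a) (h2 : x * a * x = x) : x = inv a := by
  have ha1 := hS.mul_inv_mul a
  have ha2 := hS.inv_mul_inv a
  have hxa : (x*a)*(x*a) = x*a := by
    calc (x*a)*(x*a) = (x*a*x)*a := by simp [mul_assoc]
      _ = x*a := by rw [h2]
  have hax : (a*x)*(a*x) = a*x := by
    calc (a*x)*(a*x) = (a*x*a)*x := by simp [mul_assoc]
      _ = a*x := by rw [h1]
  have hya : (inv a*a)*(inv a*a) = inv a*a := idem_invmul hS a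
  have hay : (a*inv a)*(a*inv a) = a*inv a := idem_mulinv hS a
  have hcc : (x*a)*(inv a*a) = (inv a*a)*(x*a) := hS.idem_comm _ _ hxa hya
  have hcc2 : (a*x)*(a*inv a) = (a*inv a)*(a*x) := hS.idem_comm _ _ hax hay
  have e1 : x = inv a * (a*x) := by
    calc x = (x*a)*x := h2.symm
      _ = ((x*a)*(inv a*a))*x := by
          rw [show (x*a)*(inv a*a) = x*a from by
            simp only [mul_assoc]; rw [← mul_assoc a, ha1]]
      _ = ((inv a*a)*(x*a))*x := by rw [hcc]
      _ = (inv a*a)*((x*a)*x) := by rw [mul_assoc]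
      _ = inv a*(a*x) := by rw [h2, mul_assoc]
  have e3 : inv a = inv a*(a*x) := by
    calc inv a = (inv a*a)*inv a := ha2.symm
      _ = inv a*(a*inv a) := by rw [mul_assoc]
      _ = inv a*((a*x)*(a*inv a)) := by
          rw [show (a*x)*(a*inv a) = a*inv a from by rw [← mul_assoc, h1]]
      _ = inv a*((a*inv a)*(a*x)) := by rw [hcc2]
      _ = (inv a*(a*inv a))*(a*x) := (mul_assoc _ _ _).symm
      _ = inv a*(a*x) := by
          rw [show inv a*(a*inv a) = inv a from by rw [← mul_assoc, ha2]]
  exact e1.trans e3.symm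

lemma inv_inv (hS : IsInvSgp S inv) (a : S) : inv (inv a) = a :=
  (inv_unique hS (hS.inv_mul_inv a) (hS.mul_inv_mul a)).symm

lemma inv_idem (hS : IsInvSgp S inv) {e : S} (he : e * e = e) : inv e = e :=
  (inv_unique hS (by rw [he, he]) (by rw [he, he])).symm

lemma inv_mul_rev (hS : IsInvSgp S inv) (a b : S) : inv (a * b) = inv b * inv a := by
  have hc : (b*inv b)*(inv a*a) = (inv a*a)*(b*inv b) :=
    hS.idem_comm _ _ (idem_mulinv hS b) (idem_invmul hS a)
  refine (inv_unique hS ?_ ?_).symm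
  · calc (a*b)*(inv b*inv a)*(a*b) = a*((b*inv b)*((inv a*a)*b)) := by simp [mul_assoc]
      _ = a*((inv a*a)*((b*inv b)*b)) := by rw [comm3 hc]
      _ = (a*inv a*a)*(b*inv b*b) := by simp [mul_assoc]
      _ = a*b := by rw [hS.mul_inv_mul, hS.mul_inv_mul]
  · calc (inv b*inv a)*(a*b)*(inv b*inv a)
        = inv b*((inv a*a)*((b*inv b)*inv a)) := by simp [mul_assoc]
      _ = inv b*((b*inv b)*((inv a*a)*inv a)) := by rw [comm3 hc.symm]
      _ = (inv b*b*inv b)*(inv a*a*inv a) := by simp [mul_assoc]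
      _ = inv b*inv a := by rw [hS.inv_mul_inv, hS.inv_mul_inv]

lemma nle_refl (hS : IsInvSgp S inv) (a : S) : nle a a :=
  ⟨a * inv a, idem_mulinv hS a, (hS.mul_inv_mul a).symm⟩

lemma nle_trans (hS : IsInvSgp S inv) {a b c : S} (h1 : nle a b) (h2 : nle b c) :
    nle a c := by
  obtain ⟨e, he, hab⟩ := h1; obtain ⟨f, hf, hbc⟩ := h2
  refine ⟨e*f, ?_, by rw [hab, hbc, mul_assoc]⟩
  have hc := hS.idem_comm e f he hf
  calc (e*f)*(e*f) = e*((f*e)*f) := by simp [mul_assoc]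
    _ = e*((e*f)*f) := by rw [← hc]
    _ = (e*e)*(f*f) := by simp [mul_assoc]
    _ = e*f := by rw [he, hf]

lemma nle_mid (hS : IsInvSgp S inv) {e : S} (he : e * e = e) (b c : S) :
    nle (b * (e * c)) (b * c) := by
  have hcomm : e * (inv b * b) = (inv b * b) * e := hS.idem_comm _ _ he (idem_invmul hS b)
  have hwidem : (b*(e*inv b)) * (b*(e*inv b)) = b*(e*inv b) := by
    calc (b*(e*inv b)) * (b*(e*inv b)) = b * (e * ((inv b * b) * (e * inv b))) := by
          simp [mul_assoc]
      _ = b * ((inv b * b) * (e * (e * inv b))) := by rw [comm3 hcomm]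
      _ = (b * inv b * b) * (e * (e * inv b)) := by simp [mul_assoc]
      _ = b * (e * (e * inv b)) := by rw [hS.mul_inv_mul]
      _ = b * ((e*e) * inv b) := by rw [← mul_assoc e]
      _ = b * (e * inv b) := by rw [he]
  refine ⟨b*(e*inv b), hwidem, ?_⟩
  calc b * (e * c) = (b * inv b * b) * (e * c) := by rw [hS.mul_inv_mul]
    _ = b * ((inv b * b) * (e * c)) := by simp [mul_assoc]
    _ = b * (e * ((inv b * b) * c)) := by rw [comm3 hcomm.symm]
    _ = (b*(e*inv b)) * (b * c) := by simp [mul_assoc]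

lemma nle_right_idem (hS : IsInvSgp S inv) {e : S} (he : e * e = e) (a : S) :
    nle (a * e) a := by
  have hcomm : e * (inv a * a) = (inv a * a) * e := hS.idem_comm _ _ he (idem_invmul hS a)
  have hwidem : (a*(e*inv a)) * (a*(e*inv a)) = a*(e*inv a) := by
    calc (a*(e*inv a)) * (a*(e*inv a)) = a * (e * ((inv a * a) * (e * inv a))) := by
          simp [mul_assoc]
      _ = a * ((inv a * a) * (e * (e * inv a))) := by rw [comm3 hcomm]
      _ = (a * inv a * a) * (e * (e * inv a)) := by simp [mul_assoc]
      _ = a * (e * (e * inv a)) := by rw [hS.mul_inv_mul]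
      _ = a * ((e*e) * inv a) := by rw [← mul_assoc e]
      _ = a * (e * inv a) := by rw [he]
  refine ⟨a*(e*inv a), hwidem, ?_⟩
  calc a * e = (a * inv a * a) * e := by rw [hS.mul_inv_mul]
    _ = a * ((inv a * a) * e) := by simp [mul_assoc]
    _ = a * (e * (inv a * a)) := by rw [hcomm]
    _ = (a*(e*inv a)) * a := by simp [mul_assoc]

lemma nle_mul_left (hS : IsInvSgp S inv) (c : S) {a b : S} (h : nle a b) :
    nle (c * a) (c * b) := by
  obtain ⟨e, he, hab⟩ := h
  rw [hab]
  exact nle_mid hS he c b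

lemma nle_mul_right (hS : IsInvSgp S inv) (c : S) {a b : S} (h : nle a b) :
    nle (a * c) (b * c) := by
  obtain ⟨e, he, hab⟩ := h
  exact ⟨e, he, by rw [hab, mul_assoc]⟩

lemma nle_inv (hS : IsInvSgp S inv) {a b : S} (h : nle a b) : nle (inv a) (inv b) := by
  obtain ⟨e, he, hab⟩ := h
  have h1 : inv a = inv b * e := by rw [hab, inv_mul_rev hS, inv_idem hS he]
  have h2 := nle_right_idem hS he (inv b)
  rwa [← h1] at h2

lemma mem_lcoset_iff {H : Set S} (hS : IsInvSgp S inv)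
    (hup : ∀ a ∈ H, ∀ b, nle a b → b ∈ H)
    (hmul : ∀ a ∈ H, ∀ b ∈ H, a * b ∈ H)
    {s : S} (hs : inv s * s ∈ H) (x : S) :
    x ∈ lcoset s H ↔ inv s * x ∈ H := by
  constructor
  · rintro ⟨h, hh, hle⟩
    have h1 : nle (inv s * (s * h)) (inv s * x) := nle_mul_left hS (inv s) hle
    have h2 : inv s * (s * h) ∈ H := by
      have := hmul _ hs _ hh
      rwa [mul_assoc] at this
    exact hup _ h2 _ h1
  · intro hx
    refine ⟨inv s * x, hx, ⟨s * inv s, idem_mulinv hS s, by rw [← mul_assoc]⟩⟩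

lemma mem_lcoset_self {H : Set S} (hS : IsInvSgp S inv)
    (hup : ∀ a ∈ H, ∀ b, nle a b → b ∈ H)
    (hmul : ∀ a ∈ H, ∀ b ∈ H, a * b ∈ H)
    {s : S} (hs : inv s * s ∈ H) : s ∈ lcoset s H :=
  (mem_lcoset_iff hS hup hmul hs s).2 hs

lemma lcoset_eq {H : Set S} (hS : IsInvSgp S inv)
    (hup : ∀ a ∈ H, ∀ b, nle a b → b ∈ H)
    (hmul : ∀ a ∈ H, ∀ b ∈ H, a * b ∈ H)
    (hinv : ∀ a ∈ H, inv a ∈ H)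
    {s t : S} (hs : inv s * s ∈ H) (ht : inv t * t ∈ H) (hst : inv s * t ∈ H) :
    lcoset s H = lcoset t H := by
  have hts : inv t * s ∈ H := by
    have := hinv _ hst
    rwa [inv_mul_rev hS, inv_inv hS] at this
  have key : ∀ u v x : S, inv u * v ∈ H → inv v * x ∈ H → inv u * x ∈ H := by
    intro u v x huv hvx
    have hm : (inv u * v) * (inv v * x) ∈ H := hmul _ huv _ hvx
    have hmle := nle_mid hS (idem_mulinv hS v) (inv u) x
    have he : (inv u * v) * (inv v * x) = inv u * ((v * inv v) * x) := by
      simp [mul_assoc]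
    rw [he] at hm
    exact hup _ hm _ hmle
  ext x
  rw [mem_lcoset_iff hS hup hmul hs, mem_lcoset_iff hS hup hmul ht]
  exact ⟨fun hx => key t s x hts hx, fun hx => key s t x hst hx⟩

lemma lcoset_eq_self {H : Set S} (hS : IsInvSgp S inv)
    (hup : ∀ a ∈ H, ∀ b, nle a b → b ∈ H)
    (hmul : ∀ a ∈ H, ∀ b ∈ H, a * b ∈ H)
    (hinv : ∀ a ∈ H, inv a ∈ H)
    {s : S} (hsH : s ∈ H) : lcoset s H = H := by
  have hss : inv s * s ∈ H := hmul _ (hinv _ hsH) _ hsH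
  ext x
  rw [mem_lcoset_iff hS hup hmul hss]
  constructor
  · intro hx
    refine hup _ (hmul _ hsH _ hx) _ ?_
    exact ⟨s * inv s, idem_mulinv hS s, by rw [← mul_assoc]⟩
  · intro hx
    exact hmul _ (hinv _ hsH) _ hx

lemma wd {H : Set S} (hS : IsInvSgp S inv)
    (hup : ∀ a ∈ H, ∀ b, nle a b → b ∈ H)
    (hmul : ∀ a ∈ H, ∀ b ∈ H, a * b ∈ H)
    (hinv : ∀ a ∈ H, inv a ∈ H)
    {a s s' : S} (hs : inv s * s ∈ H) (hs' : inv s' * s' ∈ H)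
    (hss' : inv s * s' ∈ H) (has : inv (a*s) * (a*s) ∈ H) :
    inv (a*s') * (a*s') ∈ H ∧ lcoset (a*s) H = lcoset (a*s') H := by
  have hs's : inv s' * s ∈ H := by
    have := hinv _ hss'
    rwa [inv_mul_rev hS, inv_inv hS] at this
  have hcomm : (inv a * a) * (s * inv s) = (s * inv s) * (inv a * a) :=
    hS.idem_comm _ _ (idem_invmul hS a) (idem_mulinv hS s)
  have hx : (inv s' * s) * ((inv (a*s) * (a*s)) * (inv s * s')) ∈ H :=
    hmul _ hs's _ (hmul _ has _ hss')
  have hxe : (inv s' * s) * ((inv (a*s) * (a*s)) * (inv s * s')) =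
      inv s' * ((s * inv s) * ((inv a * a) * s')) := by
    rw [inv_mul_rev hS]
    simp only [mul_assoc]
    rw [comm4 hcomm, collapse4 (idem_mulinv hS s)]
  have h1 : inv (a*s') * (a*s') ∈ H := by
    have hm := nle_mid hS (idem_mulinv hS s) (inv s') ((inv a * a) * s')
    rw [← hxe] at hm
    have e2 : inv s' * ((inv a * a) * s') = inv (a*s') * (a*s') := by
      rw [inv_mul_rev hS]; simp [mul_assoc]
    rw [e2] at hm
    exact hup _ hx _ hm
  refine ⟨h1, ?_⟩
  have hy : (inv (a*s) * (a*s)) * (inv s * s') ∈ H := hmul _ has _ hss'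
  have hye : (inv (a*s) * (a*s)) * (inv s * s') = inv (a*s) * (a*s') := by
    rw [inv_mul_rev hS]
    simp only [mul_assoc]
    rw [comm4 hcomm]
    rw [show ∀ x:S, inv s * (s * (inv s * x)) = inv s * x from fun x => by
      rw [← mul_assoc, ← mul_assoc, hS.inv_mul_inv]]
  exact lcoset_eq hS hup hmul hinv has h1 (hye ▸ hy)

lemma act_chain {Y : Type*} (hS : IsInvSgp S inv) {actY : S → Y → Option Y}
    (hY : IsAction actY) {s : S} {x z : Y} (h : actY s x = some z) :
    actY (inv s * s) x = some x ∧ actY (inv s) z = some x ∧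
      actY (s * inv s) z = some z := by
  have h1 : actY (s * (inv s * s)) x = some z := by
    rw [show s * (inv s * s) = s from by rw [← mul_assoc, hS.mul_inv_mul]]
    exact h
  rw [hY.2] at h1
  have h2 : actY (inv s * s) x = some x := by
    cases hw : actY (inv s * s) x with
    | none => rw [hw] at h1; simp at h1
    | some w =>
      have hwx := hY.1 _ (idem_invmul hS s) _ _ hw
      rw [hwx]
  refine ⟨h2, ?_, ?_⟩
  · have h3 := h2
    rw [hY.2, h] at h3
    simpa using h3
  · have h4 : actY ((s * inv s) * s) x = some z := by
      rw [hS.mul_inv_mul s]; exact h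
    rw [hY.2, h] at h4
    simpa using h4

lemma act_invsq {Y : Type*} (hS : IsInvSgp S inv) {actY : S → Y → Option Y}
    (hY : IsAction actY) {s : S} {x z : Y} (h : actY s x = some z) :
    actY (inv s * s) x = some x :=
  (act_chain hS hY h).1

lemma act_some {Y : Type*} {actY : S → Y → Option Y}
    (hY : IsAction actY) {s : S} {x : Y} (h : actY (inv s * s) x = some x) :
    ∃ z, actY s x = some z := by
  rw [hY.2] at h
  cases hz : actY s x with
  | none => rw [hz] at h; simp at h
  | some z => exact ⟨z, rfl⟩

end Aux

/-- Every transitive action of `S` is strongly covered by a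
universal one, namely the action on the left cosets of `H = (E(S_y))↑`. -/
theorem stmt12 {S Y : Type*} [Semigroup S] (inv : S → S) (hS : IsInvSgp S inv)
    (actY : S → Y → Option Y) (hY : IsAction actY) (hYt : IsTransitiveAct actY)
    (y : Y) (F H : Set S)
    (hF : F = idemSet (stab actY y)) (hH : H = up F) :
    -- `H` is itself a left coset, i.e. a point of the coset space `X`
    (∃ s : S, inv s * s ∈ H ∧ H = lcoset s H) ∧
    -- the partial action `a · (sH)↑ = ((a*s)H)↑`, defined when `inv (a*s) * (a*s) ∈ H`
    ∃ act : S → {A : Set S // ∃ s : S, inv s * s ∈ H ∧ A = lcoset s H} →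
        Option {A : Set S // ∃ s : S, inv s * s ∈ H ∧ A = lcoset s H},
      (∀ (a : S) (A B : {A : Set S // ∃ s : S, inv s * s ∈ H ∧ A = lcoset s H}),
        act a A = some B ↔
          ∃ s : S, inv s * s ∈ H ∧ (A : Set S) = lcoset s H ∧
            inv (a * s) * (a * s) ∈ H ∧ (B : Set S) = lcoset (a * s) H) ∧
      -- it is a transitive action satisfying (A1) and (A2)
      IsAction act ∧ IsTransitiveAct act ∧
      -- the stabilizer of the point `H` is `H` itself (so the action is universal)
      (∀ A : {A : Set S // ∃ s : S, inv s * s ∈ H ∧ A = lcoset s H},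
        (A : Set S) = H → stab act A = H) ∧
      -- and there is a surjective strong morphism onto `Y` sending `H` to `y`
      ∃ α : {A : Set S // ∃ s : S, inv s * s ∈ H ∧ A = lcoset s H} → Y,
        IsStrongMorphism act actY α ∧ Function.Surjective α ∧
          ∀ A : {A : Set S // ∃ s : S, inv s * s ∈ H ∧ A = lcoset s H},
            (A : Set S) = H → α A = y := by
  classical
  -- basic membership facts
  have hFmem : ∀ f : S, f ∈ F ↔ actY f y = some y ∧ f * f = f := by
    intro f; rw [hF]; exact Iff.rfl
  have hHmem : ∀ h : S, h ∈ H ↔ ∃ f ∈ F, nle f h := by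
    intro h; rw [hH]; exact Iff.rfl
  have hFstab : ∀ f ∈ F, actY f y = some y := fun f hf => ((hFmem f).1 hf).1
  have hFidem : ∀ f ∈ F, f * f = f := fun f hf => ((hFmem f).1 hf).2
  have hmemF : ∀ c : S, c * c = c → actY c y = some y → c ∈ F :=
    fun c h1 h2 => (hFmem c).2 ⟨h2, h1⟩
  have hFH : F ⊆ H := fun f hf => (hHmem f).2 ⟨f, hf, nle_refl hS f⟩
  have hHup : ∀ a ∈ H, ∀ b, nle a b → b ∈ H := by
    intro a ha b hab
    obtain ⟨f, hf, hfa⟩ := (hHmem a).1 ha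
    exact (hHmem b).2 ⟨f, hf, nle_trans hS hfa hab⟩
  have hHstab : ∀ h ∈ H, actY h y = some y := by
    intro h hh
    obtain ⟨f, hf, e, he, hfe⟩ := (hHmem h).1 hh
    have h1 : actY (e * h) y = some y := by rw [← hfe]; exact hFstab f hf
    rw [hY.2] at h1
    cases hw : actY h y with
    | none => rw [hw] at h1; simp at h1
    | some w =>
      rw [hw] at h1
      simp only [Option.bind_some] at h1
      have := hY.1 e he w y h1
      rw [this]
  have hHmul : ∀ a ∈ H, ∀ b ∈ H, a * b ∈ H := by
    intro a ha b hb
    obtain ⟨f, hf, hfa⟩ := (hHmem a).1 ha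
    obtain ⟨g, hg, hgb⟩ := (hHmem b).1 hb
    have hfg : f * g ∈ F := by
      refine hmemF _ ?_ ?_
      · have hc : f * g = g * f := hS.idem_comm _ _ (hFidem f hf) (hFidem g hg)
        calc (f*g)*(f*g) = f*((g*f)*g) := by simp [mul_assoc]
          _ = f*((f*g)*g) := by rw [← hc]
          _ = (f*f)*(g*g) := by simp [mul_assoc]
          _ = f*g := by rw [hFidem f hf, hFidem g hg]
      · rw [hY.2, hFstab g hg]
        simpa using hFstab f hf
    refine (hHmem _).2 ⟨f*g, hfg, ?_⟩
    exact nle_trans hS (nle_mul_left hS f hgb) (nle_mul_right hS b hfa)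
  have hHinv : ∀ a ∈ H, inv a ∈ H := by
    intro a ha
    obtain ⟨f, hf, hfa⟩ := (hHmem a).1 ha
    have h1 := nle_inv hS hfa
    rw [inv_idem hS (hFidem f hf)] at h1
    exact (hHmem _).2 ⟨f, hf, h1⟩
  -- a base idempotent
  obtain ⟨s₁, hs₁⟩ := hYt y y
  have hf₀F : (inv s₁ * s₁) ∈ F := hmemF _ (idem_invmul hS s₁) (act_invsq hS hY hs₁)
  set f₀ := inv s₁ * s₁ with hf₀
  have hf₀idem : f₀ * f₀ = f₀ := hFidem _ hf₀F
  have hf₀H : f₀ ∈ H := hFH hf₀F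
  have hf₀inv : inv f₀ * f₀ ∈ H := by
    rw [inv_idem hS hf₀idem, hf₀idem]; exact hf₀H
  have hHco : H = lcoset f₀ H := (lcoset_eq_self hS hHup hHmul hHinv hf₀H).symm
  refine ⟨⟨f₀, hf₀inv, hHco⟩, ?_⟩
  -- the action on cosets
  set act : S → {A : Set S // ∃ s : S, inv s * s ∈ H ∧ A = lcoset s H} →
      Option {A : Set S // ∃ s : S, inv s * s ∈ H ∧ A = lcoset s H} :=
    fun a A =>
      if h : ∃ s, inv s * s ∈ H ∧ (A : Set S) = lcoset s H ∧ inv (a*s) * (a*s) ∈ H then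
        some ⟨lcoset (a * h.choose) H, a * h.choose, h.choose_spec.2.2, rfl⟩
      else none
    with hactdef
  have hspec : ∀ (a : S) (A B : {A : Set S // ∃ s : S, inv s * s ∈ H ∧ A = lcoset s H}),
      act a A = some B ↔
        ∃ s : S, inv s * s ∈ H ∧ (A : Set S) = lcoset s H ∧
          inv (a * s) * (a * s) ∈ H ∧ (B : Set S) = lcoset (a * s) H := by
    intro a A B
    constructor
    · intro h
      simp only [hactdef] at h
      by_cases hc : ∃ s, inv s * s ∈ H ∧ (A : Set S) = lcoset s H ∧ inv (a*s) * (a*s) ∈ H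
      · rw [dif_pos hc] at h
        obtain ⟨h1, h2, h3⟩ := hc.choose_spec
        have hBX := Option.some.inj h
        exact ⟨hc.choose, h1, h2, h3, congrArg Subtype.val hBX.symm⟩
      · rw [dif_neg hc] at h
        cases h
    · rintro ⟨s, h1, h2, h3, h4⟩
      have hc : ∃ s, inv s * s ∈ H ∧ (A : Set S) = lcoset s H ∧ inv (a*s) * (a*s) ∈ H :=
        ⟨s, h1, h2, h3⟩
      simp only [hactdef]
      rw [dif_pos hc]
      obtain ⟨g1, g2, g3⟩ := hc.choose_spec
      have hss' : inv hc.choose * s ∈ H := by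
        have hmem1 : s ∈ lcoset s H := mem_lcoset_self hS hHup hHmul h1
        rw [← h2, g2] at hmem1
        exact (mem_lcoset_iff hS hHup hHmul g1 s).1 hmem1
      have hsame : lcoset (a * hc.choose) H = lcoset (a * s) H :=
        (wd hS hHup hHmul hHinv g1 h1 hss' g3).2
      exact congrArg some (Subtype.ext (hsame.trans h4.symm))
  -- the two halves of axiom (A2)
  have fwd : ∀ (s t : S) A B, act (s*t) A = some B →
      ∃ C, act t A = some C ∧ act s C = some B := by
    intro s t A B h
    obtain ⟨u, g1, g2, g3, g4⟩ := (hspec _ _ _).1 h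
    have htu : inv (t*u) * (t*u) ∈ H := by
      refine hHup _ g3 _ ?_
      have hm := nle_mid hS (idem_invmul hS s) (inv u * inv t) (t*u)
      have e1 : (inv u*inv t)*((inv s*s)*(t*u)) = inv ((s*t)*u) * ((s*t)*u) := by
        simp [inv_mul_rev hS, mul_assoc]
      have e2 : (inv u*inv t)*(t*u) = inv (t*u)*(t*u) := by
        simp [inv_mul_rev hS, mul_assoc]
      rwa [e1, e2] at hm
    refine ⟨⟨lcoset (t*u) H, t*u, htu, rfl⟩, (hspec _ _ _).2 ⟨u, g1, g2, htu, rfl⟩, ?_⟩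
    refine (hspec _ _ _).2 ⟨t*u, htu, rfl, ?_, ?_⟩
    · rw [← mul_assoc s t u]; exact g3
    · rw [g4, ← mul_assoc]
  have bwd : ∀ (s t : S) A C B, act t A = some C → act s C = some B →
      act (s*t) A = some B := by
    intro s t A C B h1 h2
    obtain ⟨u, g1, g2, g3, g4⟩ := (hspec _ _ _).1 h1
    obtain ⟨v, k1, k2, k3, k4⟩ := (hspec _ _ _).1 h2
    have hvtu : inv v * (t*u) ∈ H := by
      have hmem1 : (t*u) ∈ lcoset (t*u) H := mem_lcoset_self hS hHup hHmul g3
      rw [← g4, k2] at hmem1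
      exact (mem_lcoset_iff hS hHup hHmul k1 _).1 hmem1
    obtain ⟨p1, p2⟩ := wd hS hHup hHmul hHinv k1 g3 hvtu k3
    refine (hspec _ _ _).2 ⟨u, g1, g2, ?_, ?_⟩
    · rw [mul_assoc]; exact p1
    · rw [k4, p2, ← mul_assoc]
  have hAct : IsAction act := by
    constructor
    · intro e he A B h
      obtain ⟨s, h1, h2, h3, h4⟩ := (hspec e A B).1 h
      apply Subtype.ext
      rw [h4, h2]
      have heq : inv (e*s) * (e*s) = inv (e*s) * s := by
        rw [inv_mul_rev hS, inv_idem hS he]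
        simp only [mul_assoc]
        rw [← mul_assoc e e s, he]
      have key : inv (e*s) * s ∈ H := by rw [← heq]; exact h3
      exact lcoset_eq hS hHup hHmul hHinv h3 h1 key
    · intro s t A
      cases h1 : act (s*t) A with
      | some B =>
        obtain ⟨C, hC, hB⟩ := fwd s t A B h1
        rw [hC]
        simp only [Option.bind_some]
        exact hB.symm
      | none =>
        cases h2 : act t A with
        | none => simp
        | some C =>
          simp only [Option.bind_some]
          cases h3 : act s C with
          | none => rfl
          | some B => exact absurd (bwd s t A C B h2 h3) (by rw [h1]; simp)
  have hTrans : IsTransitiveAct act := by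
    intro A B
    obtain ⟨s, hs, hA⟩ := A.2
    obtain ⟨t, ht, hB⟩ := B.2
    have has2 : inv ((t*inv s)*s) * ((t*inv s)*s) ∈ H := by
      have hmem2 : (inv s * s) * ((inv t * t) * (inv s * s)) ∈ H :=
        hHmul _ hs _ (hHmul _ ht _ hs)
      have heq : inv ((t*inv s)*s) * ((t*inv s)*s)
          = (inv s * s) * ((inv t * t) * (inv s * s)) := by
        simp [inv_mul_rev hS, inv_inv hS, mul_assoc]
      rw [heq]; exact hmem2
    refine ⟨t * inv s, (hspec _ _ _).2 ⟨s, hs, hA, has2, ?_⟩⟩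
    rw [hB]
    refine (lcoset_eq hS hHup hHmul hHinv has2 ht ?_).symm
    have heq2 : inv ((t*inv s)*s) * t = (inv s * s) * (inv t * t) := by
      simp [inv_mul_rev hS, inv_inv hS, mul_assoc]
    rw [heq2]
    exact hHmul _ hs _ ht
  have hStab : ∀ A : {A : Set S // ∃ s : S, inv s * s ∈ H ∧ A = lcoset s H},
      (A : Set S) = H → stab act A = H := by
    intro A hA
    ext a
    simp only [stab, Set.mem_setOf_eq]
    constructor
    · intro h
      obtain ⟨s, h1, h2, h3, h4⟩ := (hspec a A A).1 h
      rw [hA] at h2 h4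
      have hsH : s ∈ H := by
        have := mem_lcoset_self hS hHup hHmul h1
        rwa [← h2] at this
      have hasH : a * s ∈ H := by
        have := mem_lcoset_self hS hHup hHmul h3
        rwa [← h4] at this
      have hmem3 : (a*s) * inv s ∈ H := hHmul _ hasH _ (hHinv _ hsH)
      refine hHup _ hmem3 _ ?_
      have hm := nle_right_idem hS (idem_mulinv hS s) a
      rwa [← mul_assoc] at hm
    · intro haH
      have hafH : a * f₀ ∈ H := hHmul _ haH _ hf₀H
      refine (hspec a A A).2 ⟨f₀, hf₀inv, by rw [hA]; exact hHco, ?_, ?_⟩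
      · exact hHmul _ (hHinv _ hafH) _ hafH
      · rw [hA]
        exact (lcoset_eq_self hS hHup hHmul hHinv hafH).symm
  -- the morphism
  have hαex : ∀ A : {A : Set S // ∃ s : S, inv s * s ∈ H ∧ A = lcoset s H},
      ∃ z, ∀ s, inv s * s ∈ H → (A : Set S) = lcoset s H → actY s y = some z := by
    intro A
    obtain ⟨s₀, hs₀, hA₀⟩ := A.2
    obtain ⟨z₀, hz₀⟩ := act_some hY (hHstab _ hs₀)
    refine ⟨z₀, fun s hs hA => ?_⟩
    obtain ⟨z, hz⟩ := act_some hY (hHstab _ hs)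
    have hss : inv s₀ * s ∈ H := by
      have hmem1 : s ∈ lcoset s H := mem_lcoset_self hS hHup hHmul hs
      rw [← hA, hA₀] at hmem1
      exact (mem_lcoset_iff hS hHup hHmul hs₀ s).1 hmem1
    have h2 : actY (s₀ * (inv s₀ * s)) y = some z₀ := by
      rw [hY.2, hHstab _ hss, Option.bind_some, hz₀]
    rw [← mul_assoc, hY.2, hz, Option.bind_some] at h2
    have h3 := hY.1 _ (idem_mulinv hS s₀) _ _ h2
    rw [hz, h3]
  have hmor : IsMorphism act actY (fun A => (hαex A).choose) := by
    intro a A B h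
    obtain ⟨s, h1, h2, h3, h4⟩ := (hspec a A B).1 h
    have e1 : actY s y = some ((hαex A).choose) := (hαex A).choose_spec s h1 h2
    have e2 : actY (a*s) y = some ((hαex B).choose) := (hαex B).choose_spec (a*s) h3 h4
    rw [hY.2, e1, Option.bind_some] at e2
    exact e2
  have hstrong : ∀ (a : S) A (y' : Y), actY a ((hαex A).choose) = some y' →
      ∃ B, act a A = some B := by
    intro a A y' h
    obtain ⟨s, h1, h2⟩ := A.2
    have e1 : actY s y = some ((hαex A).choose) := (hαex A).choose_spec s h1 h2
    have e2 : actY (a*s) y = some y' := by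
      rw [hY.2, e1, Option.bind_some]; exact h
    have e3 : inv (a*s) * (a*s) ∈ H :=
      hFH (hmemF _ (idem_invmul hS (a*s)) (act_invsq hS hY e2))
    exact ⟨⟨lcoset (a*s) H, a*s, e3, rfl⟩, (hspec _ _ _).2 ⟨s, h1, h2, e3, rfl⟩⟩
  have hsurj : Function.Surjective (fun A : {A : Set S // ∃ s : S, inv s * s ∈ H ∧ A = lcoset s H} => (hαex A).choose) := by
    intro y'
    obtain ⟨s, hs⟩ := hYt y y'
    have hss : inv s * s ∈ H :=
      hFH (hmemF _ (idem_invmul hS s) (act_invsq hS hY hs))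
    refine ⟨⟨lcoset s H, s, hss, rfl⟩, ?_⟩
    have := (hαex ⟨lcoset s H, s, hss, rfl⟩).choose_spec s hss rfl
    rw [hs] at this
    exact (Option.some.inj this).symm
  have hαH : ∀ A : {A : Set S // ∃ s : S, inv s * s ∈ H ∧ A = lcoset s H},
      (A : Set S) = H → (hαex A).choose = y := by
    intro A hA
    have := (hαex A).choose_spec f₀ hf₀inv (by rw [hA]; exact hHco)
    rw [hFstab _ hf₀F] at this
    exact (Option.some.inj this).symm
  exact ⟨act, hspec, hAct, hTrans, hStab, fun A => (hαex A).choose,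
    ⟨hmor, hstrong⟩, hsurj, hαH⟩


end InvSgpPaper
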